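/- Let E ∪_m F be an adjunction topological graph such that G is a regular closed subgraph of F and m : G → E is a regular factor map. If G⁰_sink ∩ (closure(F⁰_sink) \ F⁰_sink) ∩ F⁰_fin = ∅, then E is a regular closed subgraph of E ∪_m F and the canonical pair p : F → E ∪_m F is a regular factor map. -/

import Mathlib

open Set Topology

/-- A continuous map which is proper: preimages of compact sets are compact. -/
def ProperCont {X Y : Type*} [TopologicalSpace X] [TopologicalSpace Y] (f : X → Y) : Prop :=
  Continuous f ∧ ∀ K : Set Y, IsCompact K → IsCompact (f ⁻¹' K)

/-- The raw data of a (topological) graph: a source and a range map from edges to vertices. -/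
structure GraphData (V E : Type*) where
  s : E → V
  r : E → V

/-- `g` is a topological graph: source and range are continuous and the range map is a
local homeomorphism. -/
structure IsTopGraph {V E : Type*} [TopologicalSpace V] [TopologicalSpace E]
    (g : GraphData V E) : Prop where
  s_cont : Continuous g.s
  r_cont : Continuous g.r
  r_locHomeo : IsLocalHomeomorph g.r

namespace GraphData

variable {V E : Type*} [TopologicalSpace V] [TopologicalSpace E]

/-- `E⁰_fin`: vertices having a neighborhood whose preimage under the source map is compact. -/
def finSet (g : GraphData V E) : Set V := {v | ∃ U ∈ nhds v, IsCompact (g.s ⁻¹' U)}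

/-- `E⁰_sink = E⁰ \ closure (s(E¹))`. -/
def sinkSet (g : GraphData V E) : Set V := (closure (Set.range g.s))ᶜ

/-- `E⁰_reg = E⁰_fin \ closure (E⁰_sink)`. -/
def regSet (g : GraphData V E) : Set V := g.finSet \ closure g.sinkSet

/-- `E⁰_sing = E⁰ \ E⁰_reg`. -/
def singSet (g : GraphData V E) : Set V := (g.regSet)ᶜ

/-- A set of vertices is negatively invariant if every regular vertex in it emits an
edge whose range lies in it. -/
def NegInvariant (g : GraphData V E) (Y : Set V) : Prop :=
  ∀ v ∈ Y ∩ g.regSet, ∃ e, g.s e = v ∧ g.r e ∈ Y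

/-- A topological graph is row-finite if `s(E¹) = E⁰_reg`. -/
def RowFinite (g : GraphData V E) : Prop := Set.range g.s = g.regSet

/-- The restriction of a graph to a pair of subsets of vertices and edges. -/
def restrict (g : GraphData V E) (G0 : Set V) (G1 : Set E)
    (hs : Set.MapsTo g.s G1 G0) (hr : Set.MapsTo g.r G1 G0) : GraphData G0 G1 where
  s := fun e => ⟨g.s e, hs e.2⟩
  r := fun e => ⟨g.r e, hr e.2⟩

end GraphData

/-- `(G0, G1)` determines a closed subgraph of `g` (in particular it is itself
a topological graph with the restricted source and range maps). -/
structure IsClosedSubgraph {V E : Type*} [TopologicalSpace V] [TopologicalSpace E]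
    (g : GraphData V E) (G0 : Set V) (G1 : Set E) : Prop where
  s_maps : Set.MapsTo g.s G1 G0
  r_maps : Set.MapsTo g.r G1 G0
  closed0 : IsClosed G0
  closed1 : IsClosed G1
  isGraph : IsTopGraph (g.restrict G0 G1 s_maps r_maps)

/-- A regular closed subgraph: a closed subgraph whose vertex set is negatively invariant
and such that `r⁻¹(G⁰) ⊆ G¹`. -/
structure IsRegularClosedSubgraph {V E : Type*} [TopologicalSpace V] [TopologicalSpace E]
    (g : GraphData V E) (G0 : Set V) (G1 : Set E) extends IsClosedSubgraph g G0 G1 : Prop where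
  negInv : g.NegInvariant G0
  r_pre : g.r ⁻¹' G0 ⊆ G1

/-- A regular factor map `(m¹, m⁰) : gG → gF` between topological graphs: a pair of proper
continuous maps satisfying (F1), (F2) and (F3). -/
structure IsRegularFactorMap {V1 E1 V2 E2 : Type*}
    [TopologicalSpace V1] [TopologicalSpace E1] [TopologicalSpace V2] [TopologicalSpace E2]
    (gG : GraphData V1 E1) (gF : GraphData V2 E2) (m0 : V1 → V2) (m1 : E1 → E2) : Prop where
  proper0 : ProperCont m0
  proper1 : ProperCont m1
  F1r : ∀ e, gF.r (m1 e) = m0 (gG.r e)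
  F1s : ∀ e, gF.s (m1 e) = m0 (gG.s e)
  F2 : ∀ (x : E2) (v : V1), gF.r x = m0 v → ∃! e : E1, m1 e = x ∧ gG.r e = v
  F3 : m0 '' gG.singSet ⊆ gF.singSet

section Adjunction

/-- The relation generating the adjunction-space identification: `a ∈ A ⊆ Y` is glued
to `f a ∈ X`. -/
inductive AdjRel {X Y : Type*} {A : Set Y} (f : A → X) : X ⊕ Y → X ⊕ Y → Prop
  | glue (a : A) : AdjRel f (Sum.inl (f a)) (Sum.inr a.1)

/-- The adjunction space `X ∪_f Y`. -/
def AdjSpace {X Y : Type*} {A : Set Y} (f : A → X) : Type _ := Quot (AdjRel f)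

instance {X Y : Type*} [TopologicalSpace X] [TopologicalSpace Y] {A : Set Y} (f : A → X) :
    TopologicalSpace (AdjSpace f) :=
  inferInstanceAs (TopologicalSpace (Quot (AdjRel f)))

/-- The canonical (closed) embedding `X → X ∪_f Y`. -/
def adjInc {X Y : Type*} {A : Set Y} (f : A → X) : X → AdjSpace f :=
  fun x => Quot.mk _ (Sum.inl x)

/-- The canonical map `p : Y → X ∪_f Y`. -/
def adjP {X Y : Type*} {A : Set Y} (f : A → X) : Y → AdjSpace f :=
  fun y => Quot.mk _ (Sum.inr y)

variable {VE EE VF EF : Type*}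

/-- The source map `s_∪` of the adjunction graph `E ∪_m F`. -/
def adjS (gE : GraphData VE EE) (gF : GraphData VF EF) {G0 : Set VF} {G1 : Set EF}
    (m0 : G0 → VE) (m1 : G1 → EE) (hs : Set.MapsTo gF.s G1 G0)
    (hF1s : ∀ e : G1, gE.s (m1 e) = m0 ⟨gF.s e, hs e.2⟩) :
    AdjSpace m1 → AdjSpace m0 :=
  Quot.lift
    (fun x => match x with
      | Sum.inl e => adjInc m0 (gE.s e)
      | Sum.inr e => adjP m0 (gF.s e))
    (by
      rintro _ _ ⟨a⟩
      show adjInc m0 (gE.s (m1 a)) = adjP m0 (gF.s a.1)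
      rw [hF1s a]
      exact Quot.sound (AdjRel.glue ⟨gF.s a.1, hs a.2⟩))

/-- The range map `r_∪` of the adjunction graph `E ∪_m F`. -/
def adjR (gE : GraphData VE EE) (gF : GraphData VF EF) {G0 : Set VF} {G1 : Set EF}
    (m0 : G0 → VE) (m1 : G1 → EE) (hr : Set.MapsTo gF.r G1 G0)
    (hF1r : ∀ e : G1, gE.r (m1 e) = m0 ⟨gF.r e, hr e.2⟩) :
    AdjSpace m1 → AdjSpace m0 :=
  Quot.lift
    (fun x => match x with
      | Sum.inl e => adjInc m0 (gE.r e)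
      | Sum.inr e => adjP m0 (gF.r e))
    (by
      rintro _ _ ⟨a⟩
      show adjInc m0 (gE.r (m1 a)) = adjP m0 (gF.r a.1)
      rw [hF1r a]
      exact Quot.sound (AdjRel.glue ⟨gF.r a.1, hr a.2⟩))

/-- The adjunction graph `E ∪_m F`, obtained by attaching the topological graph `F` to the
topological graph `E` along a closed subgraph `(G0, G1)` of `F` via the pair `(m¹, m⁰)`. -/
def adjGraph (gE : GraphData VE EE) (gF : GraphData VF EF) {G0 : Set VF} {G1 : Set EF}
    (m0 : G0 → VE) (m1 : G1 → EE)
    (hs : Set.MapsTo gF.s G1 G0) (hr : Set.MapsTo gF.r G1 G0)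
    (hF1s : ∀ e : G1, gE.s (m1 e) = m0 ⟨gF.s e, hs e.2⟩)
    (hF1r : ∀ e : G1, gE.r (m1 e) = m0 ⟨gF.r e, hr e.2⟩) :
    GraphData (AdjSpace m0) (AdjSpace m1) where
  s := adjS gE gF m0 m1 hs hF1s
  r := adjR gE gF m0 m1 hr hF1r

end Adjunction

section GraphLemmas

open Set

variable {V E : Type*} [TopologicalSpace V] [TopologicalSpace E]

lemma finSet_isOpen (g : GraphData V E) : IsOpen g.finSet := by
  rw [isOpen_iff_mem_nhds]
  rintro v ⟨U, hU, hK⟩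
  refine Filter.mem_of_superset (interior_mem_nhds.2 hU) ?_
  intro u hu
  exact ⟨U, mem_interior_iff_mem_nhds.1 hu, hK⟩

lemma sink_subset_sing (g : GraphData V E) : g.sinkSet ⊆ g.singSet :=
  fun _ hv hreg => hreg.2 (subset_closure hv)

lemma regSet_isOpen (g : GraphData V E) : IsOpen g.regSet := by
  rw [GraphData.regSet, diff_eq]
  exact (finSet_isOpen g).inter isClosed_closure.isOpen_compl

lemma singSet_isClosed (g : GraphData V E) : IsClosed g.singSet :=
  (regSet_isOpen g).isClosed_compl

lemma finSet_pullback {V' E' : Type*} [TopologicalSpace V'] [TopologicalSpace E']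
    (g : GraphData V E) (g' : GraphData V' E') (φ0 : V → V') (φ1 : E → E')
    (hc : Continuous φ0) (hp : ∀ K : Set E', IsCompact K → IsCompact (φ1 ⁻¹' K))
    (hcomm : ∀ e, g'.s (φ1 e) = φ0 (g.s e)) {v : V} (h : φ0 v ∈ g'.finSet) :
    v ∈ g.finSet := by
  obtain ⟨U, hU, hK⟩ := h
  refine ⟨φ0 ⁻¹' U, hc.continuousAt.preimage_mem_nhds hU, ?_⟩
  have hid : g.s ⁻¹' (φ0 ⁻¹' U) = φ1 ⁻¹' (g'.s ⁻¹' U) := by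
    ext e
    simp only [mem_preimage, ← hcomm e]
  rw [hid]
  exact hp _ hK

lemma mem_range_s_of (g : GraphData V E) [T2Space V] (hs : Continuous g.s) {v : V}
    (hfin : v ∈ g.finSet) (hcl : v ∈ closure (Set.range g.s)) : v ∈ Set.range g.s := by
  obtain ⟨U, hU, hK⟩ := hfin
  have hD : IsClosed (g.s '' (g.s ⁻¹' U)) := (hK.image hs).isClosed
  have hvD : v ∈ closure (g.s '' (g.s ⁻¹' U)) := by
    rw [mem_closure_iff]
    intro o ho hvo
    obtain ⟨z, hz, e, rfl⟩ := mem_closure_iff.1 hcl (o ∩ interior U)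
      (ho.inter isOpen_interior) ⟨hvo, mem_interior_iff_mem_nhds.2 hU⟩
    exact ⟨g.s e, hz.1, ⟨e, Set.mem_preimage.2 (interior_subset hz.2), rfl⟩⟩
  rw [hD.closure_eq] at hvD
  obtain ⟨e, _, he⟩ := hvD
  exact ⟨e, he⟩

end GraphLemmas

section AdjLemmas

variable {X Y : Type*} [TopologicalSpace X] [TopologicalSpace Y] {A : Set Y} (f : A → X)

open Classical in
private noncomputable def adjNorm : X ⊕ Y → X ⊕ Y := fun c =>
  match c with
  | Sum.inl x => Sum.inl x
  | Sum.inr y => if h : y ∈ A then Sum.inl (f ⟨y, h⟩) else Sum.inr y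

private lemma adjNorm_inr_pos {y : Y} (h : y ∈ A) : adjNorm f (Sum.inr y) = Sum.inl (f ⟨y, h⟩) := by
  simp only [adjNorm]
  rw [dif_pos h]

private lemma adjNorm_inr_neg {y : Y} (h : y ∉ A) : adjNorm f (Sum.inr y) = Sum.inr y := by
  simp only [adjNorm]
  rw [dif_neg h]

private noncomputable def adjNormQ : AdjSpace f → X ⊕ Y :=
  Quot.lift (adjNorm f) (by
    rintro _ _ ⟨a⟩
    show Sum.inl (f a) = adjNorm f (Sum.inr a.1)
    rw [adjNorm_inr_pos f a.2])

lemma adjInc_injective : Function.Injective (adjInc f) := by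
  intro x x' h
  have h2 : (Sum.inl x : X ⊕ Y) = Sum.inl x' := congrArg (adjNormQ f) h
  exact Sum.inl.inj h2

lemma adjP_eq_adjInc {y : Y} (h : y ∈ A) : adjP f y = adjInc f (f ⟨y, h⟩) :=
  (Quot.sound (AdjRel.glue ⟨y, h⟩)).symm

lemma adjInc_eq_adjP {x : X} {y : Y} :
    adjInc f x = adjP f y ↔ ∃ h : y ∈ A, f ⟨y, h⟩ = x := by
  constructor
  · intro h
    have h2 : (Sum.inl x : X ⊕ Y) = adjNorm f (Sum.inr y) := congrArg (adjNormQ f) h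
    by_cases hy : y ∈ A
    · rw [adjNorm_inr_pos f hy] at h2
      exact ⟨hy, (Sum.inl.inj h2).symm⟩
    · rw [adjNorm_inr_neg f hy] at h2
      exact absurd h2 (by simp)
  · rintro ⟨h, rfl⟩
    exact (adjP_eq_adjInc f h).symm

lemma adjP_eq_adjP {y y' : Y} :
    adjP f y = adjP f y' ↔ y = y' ∨ ∃ (h : y ∈ A) (h' : y' ∈ A), f ⟨y, h⟩ = f ⟨y', h'⟩ := by
  constructor
  · intro h
    have h2 : adjNorm f (Sum.inr y) = adjNorm f (Sum.inr y') := congrArg (adjNormQ f) h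
    by_cases hy : y ∈ A <;> by_cases hy' : y' ∈ A
    · rw [adjNorm_inr_pos f hy, adjNorm_inr_pos f hy'] at h2
      exact Or.inr ⟨hy, hy', Sum.inl.inj h2⟩
    · rw [adjNorm_inr_pos f hy, adjNorm_inr_neg f hy'] at h2
      exact absurd h2 (by simp)
    · rw [adjNorm_inr_neg f hy, adjNorm_inr_pos f hy'] at h2
      exact absurd h2 (by simp)
    · rw [adjNorm_inr_neg f hy, adjNorm_inr_neg f hy'] at h2
      exact Or.inl (Sum.inr.inj h2)
  · rintro (rfl | ⟨h, h', heq⟩)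
    · rfl
    · rw [adjP_eq_adjInc f h, adjP_eq_adjInc f h', heq]

lemma continuous_adjInc : Continuous (adjInc f) :=
  continuous_quot_mk.comp continuous_inl

lemma continuous_adjP : Continuous (adjP f) :=
  continuous_quot_mk.comp continuous_inr

lemma isClosed_adj_iff {C : Set (AdjSpace f)} :
    IsClosed C ↔ IsClosed (adjInc f ⁻¹' C) ∧ IsClosed (adjP f ⁻¹' C) := by
  exact ((isQuotientMap_quot_mk (r := AdjRel f)).isClosed_preimage (s := C)).symm.trans
    (isClosed_sum_iff.trans Iff.rfl)

lemma adjInc_preimage_image (C : Set (X ⊕ Y)) :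
    adjInc f ⁻¹' (Quot.mk (AdjRel f) '' C) =
      Sum.inl ⁻¹' C ∪ f '' {a : A | Sum.inr a.1 ∈ C} := by
  ext x
  constructor
  · rintro ⟨c, hc, hqc⟩
    rcases c with x' | y
    · have : x' = x := adjInc_injective f hqc
      exact Or.inl (by rwa [this] at hc)
    · have h2 : adjInc f x = adjP f y := hqc.symm
      obtain ⟨hy, hfy⟩ := (adjInc_eq_adjP f).1 h2
      exact Or.inr ⟨⟨y, hy⟩, hc, hfy⟩
  · rintro (hx | ⟨a, ha, rfl⟩)
    · exact ⟨Sum.inl x, hx, rfl⟩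
    · exact ⟨Sum.inr a.1, ha, adjP_eq_adjInc f a.2⟩

lemma adjP_preimage_image (C : Set (X ⊕ Y)) :
    adjP f ⁻¹' (Quot.mk (AdjRel f) '' C) =
      Sum.inr ⁻¹' C ∪ Subtype.val '' (f ⁻¹' (adjInc f ⁻¹' (Quot.mk (AdjRel f) '' C))) := by
  ext y
  constructor
  · rintro ⟨c, hc, hqc⟩
    rcases c with x | y'
    · have h2 : adjInc f x = adjP f y := hqc
      obtain ⟨hy, hfy⟩ := (adjInc_eq_adjP f).1 h2
      refine Or.inr ⟨⟨y, hy⟩, ?_, rfl⟩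
      show adjInc f (f ⟨y, hy⟩) ∈ Quot.mk (AdjRel f) '' C
      rw [hfy]
      exact ⟨Sum.inl x, hc, rfl⟩
    · have h2 : adjP f y' = adjP f y := hqc
      rcases (adjP_eq_adjP f).1 h2 with rfl | ⟨hy', hy, heq⟩
      · exact Or.inl hc
      · refine Or.inr ⟨⟨y, hy⟩, ?_, rfl⟩
        show adjInc f (f ⟨y, hy⟩) ∈ Quot.mk (AdjRel f) '' C
        rw [← heq, ← adjP_eq_adjInc f hy']
        exact ⟨Sum.inr y', hc, rfl⟩
  · rintro (hy | ⟨a, ha, rfl⟩)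
    · exact ⟨Sum.inr y, hy, rfl⟩
    · have : adjP f a.1 = adjInc f (f a) := by
        rw [adjP_eq_adjInc f a.2]
      rw [mem_preimage, this]
      exact ha

variable [T2Space X] [T2Space Y] [LocallyCompactSpace X]

lemma properCont_isProperMap (hf : ProperCont f) : IsProperMap f :=
  isProperMap_iff_isCompact_preimage.2 ⟨hf.1, fun K hK => hf.2 K hK⟩

lemma adjQ_isClosedMap (hA : IsClosed A) (hf : ProperCont f) :
    IsClosedMap (Quot.mk (AdjRel f)) := by
  intro C hC
  have hCl : IsClosed (Sum.inl ⁻¹' C) := hC.preimage continuous_inl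
  have hCr : IsClosed (Sum.inr ⁻¹' C) := hC.preimage continuous_inr
  have h1 : IsClosed (adjInc f ⁻¹' (Quot.mk (AdjRel f) '' C)) := by
    rw [adjInc_preimage_image]
    exact hCl.union ((properCont_isProperMap f hf).isClosedMap _
      (hCr.preimage continuous_subtype_val))
  have h2 : IsClosed (adjP f ⁻¹' (Quot.mk (AdjRel f) '' C)) := by
    rw [adjP_preimage_image]
    exact hCr.union ((hA.isClosedEmbedding_subtypeVal).isClosedMap _ (h1.preimage hf.1))
  exact (isClosed_adj_iff f).2 ⟨h1, h2⟩

lemma adjQ_fiber_inc_compact (hf : ProperCont f) (x : X) :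
    IsCompact (Quot.mk (AdjRel f) ⁻¹' {adjInc f x}) := by
  have hid : Quot.mk (AdjRel f) ⁻¹' {adjInc f x} =
      {Sum.inl x} ∪ (fun a : A => (Sum.inr a.1 : X ⊕ Y)) '' (f ⁻¹' {x}) := by
    ext c
    simp only [mem_preimage, mem_singleton_iff, mem_union, mem_image]
    constructor
    · intro hc
      rcases c with x' | y
      · have : x' = x := adjInc_injective f hc
        exact Or.inl (by rw [this])
      · have h2 : adjInc f x = adjP f y := hc.symm
        obtain ⟨hy, hfy⟩ := (adjInc_eq_adjP f).1 h2
        exact Or.inr ⟨⟨y, hy⟩, hfy, rfl⟩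
    · rintro (rfl | ⟨a, ha, rfl⟩)
      · rfl
      · show adjP f a.1 = adjInc f x
        rw [adjP_eq_adjInc f a.2]
        exact congrArg (adjInc f) ha
  rw [hid]
  exact isCompact_singleton.union ((hf.2 _ isCompact_singleton).image
    (continuous_inr.comp continuous_subtype_val))

lemma adjQ_isProperMap (hA : IsClosed A) (hf : ProperCont f) :
    IsProperMap (Quot.mk (AdjRel f) : X ⊕ Y → AdjSpace f) := by
  refine isProperMap_iff_isClosedMap_and_compact_fibers.2
    ⟨continuous_quot_mk, adjQ_isClosedMap f hA hf, ?_⟩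
  intro z
  induction z using Quot.ind with
  | _ c =>
    rcases c with x | y
    · exact adjQ_fiber_inc_compact f hf x
    · by_cases hy : y ∈ A
      · have h : Quot.mk (AdjRel f) (Sum.inr y) = adjInc f (f ⟨y, hy⟩) :=
          adjP_eq_adjInc f hy
        rw [h]
        exact adjQ_fiber_inc_compact f hf _
      · have hid : Quot.mk (AdjRel f) ⁻¹' {Quot.mk (AdjRel f) (Sum.inr y)} =
            {Sum.inr y} := by
          ext c
          simp only [mem_preimage, mem_singleton_iff]
          constructor
          · intro hc
            rcases c with x' | y'
            · obtain ⟨hy', _⟩ := (adjInc_eq_adjP f).1 hc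
              exact absurd hy' hy
            · rcases (adjP_eq_adjP f).1 hc with rfl | ⟨_, hmem, _⟩
              · rfl
              · exact absurd hmem hy
          · rintro rfl; rfl
        rw [hid]
        exact isCompact_singleton

lemma properCont_adjP (hA : IsClosed A) (hf : ProperCont f) : ProperCont (adjP f) := by
  refine ⟨continuous_adjP f, fun K hK => ?_⟩
  exact IsClosedEmbedding.inr.isCompact_preimage
    ((adjQ_isProperMap f hA hf).isCompact_preimage hK)

lemma adjInc_isClosedEmbedding (hA : IsClosed A) (hf : ProperCont f) :
    IsClosedEmbedding (adjInc f) :=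
  .of_continuous_injective_isClosedMap (continuous_adjInc f) (adjInc_injective f)
    ((adjQ_isClosedMap f hA hf).comp IsClosedEmbedding.inl.isClosedMap)

lemma adjP_isClosedMap (hA : IsClosed A) (hf : ProperCont f) : IsClosedMap (adjP f) :=
  (adjQ_isClosedMap f hA hf).comp IsClosedEmbedding.inr.isClosedMap

end AdjLemmas

lemma image_closure_of_isClosedMap {X Y : Type*} [TopologicalSpace X] [TopologicalSpace Y]
    {f : X → Y} (hc : Continuous f) (hm : IsClosedMap f) (s : Set X) :
    f '' closure s = closure (f '' s) :=
  Set.Subset.antisymm (image_closure_subset_closure_image hc)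
    (closure_minimal (Set.image_mono subset_closure) (hm _ isClosed_closure))


/-- Let `E ∪_m F` be an adjunction topological graph such that `G` is a regular closed
subgraph of `F` and `m : G → E` is a regular factor map. If
`G⁰_sink ∩ (closure(F⁰_sink) \ F⁰_sink) ∩ F⁰_fin = ∅`, then `E` is a regular closed
subgraph of `E ∪_m F` and the canonical pair `p : F → E ∪_m F` is a regular factor map. -/
theorem adjGraph_regular_of_boundary_condition
    {VE EE VF EF : Type*} [TopologicalSpace VE] [TopologicalSpace EE]
    [TopologicalSpace VF] [TopologicalSpace EF]
    [LocallyCompactSpace VE] [T2Space VE] [LocallyCompactSpace EE] [T2Space EE]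
    [LocallyCompactSpace VF] [T2Space VF] [LocallyCompactSpace EF] [T2Space EF]
    (gE : GraphData VE EE) (gF : GraphData VF EF)
    (hE : IsTopGraph gE) (hF : IsTopGraph gF)
    {G0 : Set VF} {G1 : Set EF}
    (hGF : IsRegularClosedSubgraph gF G0 G1)
    (m0 : G0 → VE) (m1 : G1 → EE)
    (hF1s : ∀ e : G1, gE.s (m1 e) = m0 ⟨gF.s e, hGF.s_maps e.2⟩)
    (hF1r : ∀ e : G1, gE.r (m1 e) = m0 ⟨gF.r e, hGF.r_maps e.2⟩)
    (hm : IsRegularFactorMap (gF.restrict G0 G1 hGF.s_maps hGF.r_maps) gE m0 m1)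
    (hbound : (Subtype.val '' (gF.restrict G0 G1 hGF.s_maps hGF.r_maps).sinkSet) ∩
        ((closure gF.sinkSet \ gF.sinkSet) ∩ gF.finSet) = ∅) :
    IsRegularClosedSubgraph (adjGraph gE gF m0 m1 hGF.s_maps hGF.r_maps hF1s hF1r)
        (Set.range (adjInc m0)) (Set.range (adjInc m1)) ∧
    IsRegularFactorMap gF (adjGraph gE gF m0 m1 hGF.s_maps hGF.r_maps hF1s hF1r)
        (adjP m0) (adjP m1) := by
  have hAcl : IsClosed G0 := hGF.closed0
  have hA1cl : IsClosed G1 := hGF.closed1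
  have hm0 : ProperCont m0 := hm.proper0
  have hm1 : ProperCont m1 := hm.proper1
  set gG := gF.restrict G0 G1 hGF.s_maps hGF.r_maps with hgGdef
  set gZ := adjGraph gE gF m0 m1 hGF.s_maps hGF.r_maps hF1s hF1r with hgZdef
  have hrep1 : ∀ ξ : AdjSpace m1, (∃ x : EE, ξ = adjInc m1 x) ∨ ∃ e : EF, ξ = adjP m1 e := by
    intro ξ
    obtain ⟨c, rfl⟩ := Quot.exists_rep ξ
    rcases c with x | e
    · exact Or.inl ⟨x, rfl⟩
    · exact Or.inr ⟨e, rfl⟩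
  have hs_inl : ∀ x : EE, gZ.s (adjInc m1 x) = adjInc m0 (gE.s x) := fun _ => rfl
  have hs_inr : ∀ e : EF, gZ.s (adjP m1 e) = adjP m0 (gF.s e) := fun _ => rfl
  have hr_inl : ∀ x : EE, gZ.r (adjInc m1 x) = adjInc m0 (gE.r x) := fun _ => rfl
  have hr_inr : ∀ e : EF, gZ.r (adjP m1 e) = adjP m0 (gF.r e) := fun _ => rfl
  have hglue0 : ∀ (v : VF) (h : v ∈ G0), adjP m0 v = adjInc m0 (m0 ⟨v, h⟩) :=
    fun _ h => adjP_eq_adjInc m0 h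
  have hglue1 : ∀ (e : EF) (h : e ∈ G1), adjP m1 e = adjInc m1 (m1 ⟨e, h⟩) :=
    fun _ h => adjP_eq_adjInc m1 h
  have hq0closed := adjQ_isClosedMap m0 hAcl hm0
  have hq1proper := adjQ_isProperMap m1 hA1cl hm1
  have hi0emb := adjInc_isClosedEmbedding m0 hAcl hm0
  have hi1emb := adjInc_isClosedEmbedding m1 hA1cl hm1
  have hp0closed := adjP_isClosedMap m0 hAcl hm0
  have hp0prop := properCont_adjP m0 hAcl hm0
  have hp1prop := properCont_adjP m1 hA1cl hm1
  have hsZcont : Continuous gZ.s := by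
    refine (isQuotientMap_quot_mk (r := AdjRel m1)).continuous_iff.2 ?_
    have hfn : gZ.s ∘ Quot.mk (AdjRel m1) =
        Sum.elim (fun x => adjInc m0 (gE.s x)) (fun e => adjP m0 (gF.s e)) := by
      funext c; rcases c with x | e <;> rfl
    refine (congrArg (fun g : EE ⊕ EF → AdjSpace m0 => Continuous g) hfn).mpr ?_
    exact Continuous.sumElim ((continuous_adjInc m0).comp hE.s_cont)
      ((continuous_adjP m0).comp hF.s_cont)
  have hrZcont : Continuous gZ.r := by
    refine (isQuotientMap_quot_mk (r := AdjRel m1)).continuous_iff.2 ?_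
    have hfn : gZ.r ∘ Quot.mk (AdjRel m1) =
        Sum.elim (fun x => adjInc m0 (gE.r x)) (fun e => adjP m0 (gF.r e)) := by
      funext c; rcases c with x | e <;> rfl
    refine (congrArg (fun g : EE ⊕ EF → AdjSpace m0 => Continuous g) hfn).mpr ?_
    exact Continuous.sumElim ((continuous_adjInc m0).comp hE.r_cont)
      ((continuous_adjP m0).comp hF.r_cont)
  have hrangeS : Set.range gZ.s = adjInc m0 '' Set.range gE.s ∪ adjP m0 '' Set.range gF.s := by
    ext z
    constructor
    · rintro ⟨ξ, rfl⟩
      rcases hrep1 ξ with ⟨x, rfl⟩ | ⟨e, rfl⟩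
      · exact Or.inl ⟨gE.s x, ⟨x, rfl⟩, (hs_inl x).symm⟩
      · exact Or.inr ⟨gF.s e, ⟨e, rfl⟩, (hs_inr e).symm⟩
    · rintro (⟨w, ⟨x, rfl⟩, rfl⟩ | ⟨u, ⟨e, rfl⟩, rfl⟩)
      · exact ⟨adjInc m1 x, hs_inl x⟩
      · exact ⟨adjP m1 e, hs_inr e⟩
  have hclS : closure (Set.range gZ.s) =
      adjInc m0 '' closure (Set.range gE.s) ∪ adjP m0 '' closure (Set.range gF.s) := by
    rw [hrangeS, closure_union,
      ← image_closure_of_isClosedMap (continuous_adjInc m0) hi0emb.isClosedMap,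
      ← image_closure_of_isClosedMap (continuous_adjP m0) hp0closed]
  have hfinP : ∀ v : VF, adjP m0 v ∈ gZ.finSet → v ∈ gF.finSet := fun v h =>
    finSet_pullback gF gZ (adjP m0) (adjP m1) (continuous_adjP m0) hp1prop.2 hs_inr h
  have hfinI : ∀ w : VE, adjInc m0 w ∈ gZ.finSet → w ∈ gE.finSet := fun w h =>
    finSet_pullback gE gZ (adjInc m0) (adjInc m1) (continuous_adjInc m0)
      (fun _ hK => hi1emb.isCompact_preimage hK) hs_inl h
  have hGsink_of_F : ∀ (v : VF) (h : v ∈ G0), v ∉ closure (Set.range gF.s) →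
      (⟨v, h⟩ : G0) ∈ gG.sinkSet := by
    intro v h hv hmem
    apply hv
    have h1 : Set.range gG.s ⊆ Subtype.val ⁻¹' closure (Set.range gF.s) := by
      rintro _ ⟨e, rfl⟩
      exact subset_closure ⟨e.1, rfl⟩
    have h2 : closure (Set.range gG.s) ⊆ Subtype.val ⁻¹' closure (Set.range gF.s) :=
      closure_minimal h1 (isClosed_closure.preimage continuous_subtype_val)
    exact h2 hmem
  have hm0_cl : ∀ a : G0, a ∈ closure (Set.range gG.s) → m0 a ∈ closure (Set.range gE.s) := by
    intro a ha
    have h1 : m0 '' Set.range gG.s ⊆ Set.range gE.s := by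
      rintro _ ⟨_, ⟨e, rfl⟩, rfl⟩
      exact ⟨m1 e, hF1s e⟩
    exact closure_mono h1 (image_closure_subset_closure_image hm0.1 (Set.mem_image_of_mem m0 ha))
  have hkey : ∀ w : VE, w ∉ closure (Set.range gE.s) → adjInc m0 w ∈ gZ.finSet →
      adjInc m0 w ∉ closure gZ.sinkSet → False := by
    intro w hw hfin hncl
    obtain ⟨U₀, hU₀, hK⟩ := hfin
    have hM : IsCompact (Quot.mk (AdjRel m1) ⁻¹' (gZ.s ⁻¹' U₀)) :=
      hq1proper.isCompact_preimage hK
    have hcomm : gZ.s ∘ Quot.mk (AdjRel m1) =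
        Quot.mk (AdjRel m0) ∘ Sum.map gE.s gF.s := by
      funext c; rcases c with x | e <;> rfl
    have hDdef : gZ.s '' (gZ.s ⁻¹' U₀) = Quot.mk (AdjRel m0) ''
        (Sum.map gE.s gF.s '' (Quot.mk (AdjRel m1) ⁻¹' (gZ.s ⁻¹' U₀))) := by
      calc gZ.s '' (gZ.s ⁻¹' U₀)
          = gZ.s '' (Quot.mk (AdjRel m1) '' (Quot.mk (AdjRel m1) ⁻¹' (gZ.s ⁻¹' U₀))) := by
            exact (congrArg (fun t : Set (AdjSpace m1) => gZ.s '' t)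
              (Set.image_preimage_eq (f := Quot.mk (AdjRel m1)) (gZ.s ⁻¹' U₀) Quot.mk_surjective)).symm
        _ = (gZ.s ∘ Quot.mk (AdjRel m1)) '' (Quot.mk (AdjRel m1) ⁻¹' (gZ.s ⁻¹' U₀)) :=
            (Set.image_comp _ _ _).symm
        _ = _ := by rw [hcomm]; exact Set.image_comp _ _ _
    have hDclosed : IsClosed (gZ.s '' (gZ.s ⁻¹' U₀)) := by
      rw [hDdef]
      exact hq0closed _ (hM.image (hE.s_cont.sumMap hF.s_cont)).isClosed
    have hiw_clS : adjInc m0 w ∈ closure (Set.range gZ.s) := by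
      by_contra hc
      exact hncl (subset_closure hc)
    have hiwD : adjInc m0 w ∈ gZ.s '' (gZ.s ⁻¹' U₀) := by
      rw [← hDclosed.closure_eq, mem_closure_iff]
      intro o ho hvo
      obtain ⟨z, hz, ξ, rfl⟩ := mem_closure_iff.1 hiw_clS (o ∩ interior U₀)
        (ho.inter isOpen_interior) ⟨hvo, mem_interior_iff_mem_nhds.2 hU₀⟩
      exact ⟨gZ.s ξ, hz.1, ⟨ξ, Set.mem_preimage.2 (interior_subset hz.2), rfl⟩⟩
    obtain ⟨ξ, hξU, hξw⟩ := hiwD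
    rcases hrep1 ξ with ⟨x, rfl⟩ | ⟨e, rfl⟩
    · have hx : gE.s x = w := adjInc_injective m0 (by rw [← hs_inl x]; exact hξw)
      exact hw (subset_closure ⟨x, hx⟩)
    · have h2 : adjInc m0 w = adjP m0 (gF.s e) := by rw [← hs_inr e]; exact hξw.symm
      obtain ⟨hmem, hfeq⟩ := (adjInc_eq_adjP m0).1 h2
      have ha_sink : (⟨gF.s e, hmem⟩ : G0) ∈ gG.sinkSet := by
        intro hclG
        exact hw (hfeq ▸ hm0_cl ⟨gF.s e, hmem⟩ hclG)
      have hyfin : gF.s e ∈ gF.finSet := by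
        apply hfinP
        rw [hglue0 (gF.s e) hmem, hfeq]
        exact ⟨U₀, hU₀, hK⟩
      have hysink : gF.s e ∉ gF.sinkSet := fun h => h (subset_closure ⟨e, rfl⟩)
      have hyncl : gF.s e ∉ closure gF.sinkSet := by
        intro h
        exact (Set.eq_empty_iff_forall_notMem.1 hbound (gF.s e))
          ⟨⟨⟨gF.s e, hmem⟩, ha_sink, rfl⟩, ⟨h, hysink⟩, hyfin⟩
      obtain ⟨e', hse', hre'⟩ := hGF.negInv (gF.s e) ⟨hmem, hyfin, hyncl⟩
      have he'G : e' ∈ G1 := hGF.r_pre hre'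
      exact ha_sink (subset_closure ⟨⟨e', he'G⟩, Subtype.ext hse'⟩)
  have hC : ∀ w : VE, w ∈ gE.singSet → adjInc m0 w ∈ gZ.singSet := by
    have hstep : adjInc m0 '' gE.sinkSet ⊆ gZ.singSet := by
      rintro _ ⟨w, hw, rfl⟩
      intro hreg
      exact hkey w hw hreg.1 hreg.2
    intro w hw
    by_cases hfin : adjInc m0 w ∈ gZ.finSet
    · have hwE : w ∈ gE.finSet := hfinI w hfin
      have hwcl : w ∈ closure gE.sinkSet := by
        by_contra h
        exact hw ⟨hwE, h⟩
      have h1 : adjInc m0 w ∈ closure (adjInc m0 '' gE.sinkSet) := by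
        rw [← image_closure_of_isClosedMap (continuous_adjInc m0) hi0emb.isClosedMap]
        exact Set.mem_image_of_mem _ hwcl
      have h2 := closure_mono hstep h1
      rwa [(singSet_isClosed gZ).closure_eq] at h2
    · intro hreg
      exact hfin hreg.1
  have hF3p : adjP m0 '' gF.singSet ⊆ gZ.singSet := by
    have hstep : adjP m0 '' gF.sinkSet ⊆ gZ.singSet := by
      rintro _ ⟨u, hu, rfl⟩
      by_cases hA : u ∈ G0
      · have h1 : (⟨u, hA⟩ : G0) ∈ gG.sinkSet := hGsink_of_F u hA hu
        have h2 : m0 ⟨u, hA⟩ ∈ gE.singSet := hm.F3 ⟨⟨u, hA⟩, sink_subset_sing gG h1, rfl⟩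
        rw [hglue0 u hA]
        exact hC _ h2
      · refine sink_subset_sing gZ ?_
        intro hmem
        rw [hclS] at hmem
        rcases hmem with ⟨w', _, heq⟩ | ⟨v', hv', heq⟩
        · exact hA ((adjInc_eq_adjP m0).1 heq).1
        · rcases (adjP_eq_adjP m0).1 heq with heq2 | ⟨_, h3, _⟩
          · exact hu (heq2 ▸ hv')
          · exact hA h3
    rintro _ ⟨v, hv, rfl⟩
    by_cases hfin : adjP m0 v ∈ gZ.finSet
    · have hvfin : v ∈ gF.finSet := hfinP v hfin
      have hvcl : v ∈ closure gF.sinkSet := by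
        by_contra h
        exact hv ⟨hvfin, h⟩
      have h1 : adjP m0 v ∈ closure (adjP m0 '' gF.sinkSet) := by
        rw [← image_closure_of_isClosedMap (continuous_adjP m0) hp0closed]
        exact Set.mem_image_of_mem _ hvcl
      have h2 := closure_mono hstep h1
      rwa [(singSet_isClosed gZ).closure_eq] at h2
    · intro hreg
      exact hfin hreg.1
  have hcase1 : ∀ (x' : EE) (v : VF) (hvA : v ∈ G0), gE.r x' = m0 ⟨v, hvA⟩ →
      ∃! e : EF, adjP m1 e = adjInc m1 x' ∧ gF.r e = v := by
    intro x' v hvA hr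
    obtain ⟨eG, ⟨heG1, heG2⟩, huniq⟩ := hm.F2 x' ⟨v, hvA⟩ hr
    refine ⟨eG.1, ⟨?_, ?_⟩, ?_⟩
    · rw [hglue1 eG.1 eG.2]
      exact congrArg (adjInc m1) (by exact heG1)
    · exact congrArg Subtype.val heG2
    · rintro e' ⟨he'1, he'2⟩
      obtain ⟨hG1, hm1eq⟩ := (adjInc_eq_adjP m1).1 he'1.symm
      have h := huniq ⟨e', hG1⟩ ⟨hm1eq, Subtype.ext he'2⟩
      exact congrArg Subtype.val h
  have hF2p : ∀ (x : AdjSpace m1) (v : VF), gZ.r x = adjP m0 v →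
      ∃! e : EF, adjP m1 e = x ∧ gF.r e = v := by
    intro x v hx
    by_cases hvA : v ∈ G0
    · rw [hglue0 v hvA] at hx
      rcases hrep1 x with ⟨x', rfl⟩ | ⟨e₀, rfl⟩
      · refine hcase1 x' v hvA ?_
        exact adjInc_injective m0 (by rw [← hr_inl x']; exact hx)
      · by_cases h₀ : e₀ ∈ G1
        · rw [hglue1 e₀ h₀] at hx ⊢
          refine hcase1 (m1 ⟨e₀, h₀⟩) v hvA ?_
          exact adjInc_injective m0 (by rw [← hr_inl (m1 ⟨e₀, h₀⟩)]; exact hx)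
        · exfalso
          have h2 : adjInc m0 (m0 ⟨v, hvA⟩) = adjP m0 (gF.r e₀) := by
            rw [← hr_inr e₀, hx]
          exact h₀ (hGF.r_pre ((adjInc_eq_adjP m0).1 h2).1)
    · rcases hrep1 x with ⟨x', rfl⟩ | ⟨e₀, rfl⟩
      · exfalso
        have h2 : adjInc m0 (gE.r x') = adjP m0 v := by rw [← hr_inl x']; exact hx
        exact hvA ((adjInc_eq_adjP m0).1 h2).1
      · have h2 : adjP m0 (gF.r e₀) = adjP m0 v := by rw [← hr_inr e₀]; exact hx
        have hre : gF.r e₀ = v := by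
          rcases (adjP_eq_adjP m0).1 h2 with heq | ⟨_, h3, _⟩
          · exact heq
          · exact absurd h3 hvA
        refine ⟨e₀, ⟨rfl, hre⟩, ?_⟩
        rintro e' ⟨he'1, he'2⟩
        rcases (adjP_eq_adjP m1).1 he'1 with heq | ⟨hG1', hG1₀, _⟩
        · exact heq
        · exact absurd (hre ▸ hGF.r_maps hG1₀) hvA
  have hsm : Set.MapsTo gZ.s (Set.range (adjInc m1)) (Set.range (adjInc m0)) := by
    rintro _ ⟨x, rfl⟩
    exact ⟨gE.s x, (hs_inl x).symm⟩
  have hrm : Set.MapsTo gZ.r (Set.range (adjInc m1)) (Set.range (adjInc m0)) := by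
    rintro _ ⟨x, rfl⟩
    exact ⟨gE.r x, (hr_inl x).symm⟩
  constructor
  · refine ⟨⟨hsm, hrm, hi0emb.isClosed_range, hi1emb.isClosed_range, ?_⟩, ?_, ?_⟩
    · set φ0 : VE ≃ₜ ↥(Set.range (adjInc m0)) :=
        Topology.IsEmbedding.toHomeomorph hi0emb.toIsEmbedding with hphi0
      set φ1 : EE ≃ₜ ↥(Set.range (adjInc m1)) :=
        Topology.IsEmbedding.toHomeomorph hi1emb.toIsEmbedding with hphi1
      refine ⟨Continuous.subtype_mk (hsZcont.comp continuous_subtype_val) _,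
        Continuous.subtype_mk (hrZcont.comp continuous_subtype_val) _, ?_⟩
      have hfun : (gZ.restrict _ _ hsm hrm).r = φ0 ∘ gE.r ∘ φ1.symm := by
        funext ξ
        obtain ⟨x, rfl⟩ := φ1.surjective ξ
        simp only [Function.comp_apply, Homeomorph.symm_apply_apply]
        rw [hphi0, hphi1]
        exact Subtype.ext rfl
      rw [hfun]
      exact φ0.isLocalHomeomorph.comp (hE.r_locHomeo.comp φ1.symm.isLocalHomeomorph)
    · rintro z ⟨⟨w, rfl⟩, hreg⟩
      have hwreg : w ∈ gE.regSet := by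
        by_contra hw
        exact hC w hw hreg
      have hwcl : w ∈ closure (Set.range gE.s) := by
        by_contra h
        exact hwreg.2 (subset_closure h)
      obtain ⟨x, hx⟩ := mem_range_s_of gE hE.s_cont hwreg.1 hwcl
      exact ⟨adjInc m1 x, by rw [hs_inl x, hx], ⟨gE.r x, (hr_inl x).symm⟩⟩
    · intro ξ hξ
      rcases hrep1 ξ with ⟨x, rfl⟩ | ⟨e, rfl⟩
      · exact ⟨x, rfl⟩
      · obtain ⟨w, hw⟩ := hξ
        have h2 : adjInc m0 w = adjP m0 (gF.r e) := by rw [← hr_inr e]; exact hw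
        have heG1 : e ∈ G1 := hGF.r_pre ((adjInc_eq_adjP m0).1 h2).1
        exact ⟨m1 ⟨e, heG1⟩, (hglue1 e heG1).symm⟩
  · exact { proper0 := hp0prop, proper1 := hp1prop, F1r := hr_inr, F1s := hs_inr,
            F2 := hF2p, F3 := hF3p }
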